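/- limsup over n of n² · P(ord π = ord π') = ∞, where π, π' are independent uniformly random permutations of [n]. -/

import Mathlib

open Equiv Equiv.Perm Finset

def permCongrMulEquiv {α β : Type*} (e : α ≃ β) : Equiv.Perm α ≃* Equiv.Perm β :=
  { e.permCongr with
    map_mul' := fun p q => by
      ext x
      simp [Equiv.permCongr_apply, Equiv.Perm.mul_apply] }

lemma orderOf_permCongrME {α β : Type*} (e : α ≃ β) (p : Equiv.Perm α) :
    orderOf (permCongrMulEquiv e p) = orderOf p :=
  orderOf_injective (permCongrMulEquiv e).toMonoidHom (permCongrMulEquiv e).injective p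

lemma orderOf_conj' {G : Type*} [Group G] (a x : G) : orderOf (a * x * a⁻¹) = orderOf x :=
  orderOf_injective (MulAut.conj a).toMonoidHom (MulAut.conj a).injective x

lemma finRotate_step {m i : ℕ} (h : i + 1 < m) (h' : i < m) :
    finRotate m ⟨i, h'⟩ = ⟨i + 1, h⟩ := by
  cases m with
  | zero => omega
  | succ m =>
    rw [finRotate_succ_apply]
    apply Fin.ext
    rw [Fin.val_add_one_of_lt (by simp [Fin.lt_def, Fin.last]; omega)]

lemma orderOf_finRotate' (m : ℕ) (hm : 0 < m) : orderOf (finRotate m) = m := by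
  rcases Nat.lt_or_ge m 2 with h2 | h2
  · interval_cases m
    · have : (finRotate 1) = 1 := Subsingleton.elim _ _
      rw [this, orderOf_one]
  · rw [(isCycle_finRotate_of_le h2).orderOf, support_finRotate_of_le h2, card_univ,
      Fintype.card_fin]

lemma core (ℓ r : ℕ) (hℓ : 0 < ℓ) (hdvd : Nat.factorial r ∣ ℓ) :
    Nat.factorial (ℓ + r) ≤ (ℓ + r) *
      (Finset.univ.filter (fun π : Equiv.Perm (Fin (ℓ + r)) => orderOf π = ℓ)).card := by
  classical
  set n := ℓ + r with hn
  let e : (Fin ℓ ⊕ Fin r) ≃ Fin n := finSumFinEquiv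
  let c : Equiv.Perm (Fin ℓ) := finRotate ℓ
  have hc : orderOf c = ℓ := orderOf_finRotate' ℓ hℓ
  let F : Equiv.Perm (Fin n) × Equiv.Perm (Fin r) → Equiv.Perm (Fin n) :=
    fun p => p.1 * (permCongrMulEquiv e (Equiv.sumCongr c p.2)) * p.1⁻¹
  -- order of every F p is ℓ
  have hord : ∀ p : Equiv.Perm (Fin n) × Equiv.Perm (Fin r), orderOf (F p) = ℓ := by
    rintro ⟨α, τ⟩
    have hτ : orderOf τ ∣ ℓ := by
      refine dvd_trans (dvd_trans (orderOf_dvd_card) ?_) hdvd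
      rw [Fintype.card_perm, Fintype.card_fin]
    have h2 : Equiv.sumCongr c τ = Equiv.Perm.sumCongrHom _ _ (c, τ) := rfl
    calc orderOf (F (α, τ))
        = orderOf (permCongrMulEquiv e (Equiv.sumCongr c τ)) := orderOf_conj' α _
      _ = orderOf (Equiv.sumCongr c τ) := orderOf_permCongrME e _
      _ = orderOf ((c, τ) : Equiv.Perm (Fin ℓ) × Equiv.Perm (Fin r)) := by
          rw [h2]; exact orderOf_injective _ Equiv.Perm.sumCongrHom_injective _
      _ = Nat.lcm (orderOf c) (orderOf τ) := Prod.orderOf_mk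
      _ = ℓ := by rw [hc]; exact Nat.dvd_antisymm (Nat.lcm_dvd dvd_rfl hτ) (Nat.dvd_lcm_left _ _)
  -- key fiber bound
  have key : ∀ π ∈ (Finset.univ : Finset (Equiv.Perm (Fin n) × Equiv.Perm (Fin r))).image F,
      ((Finset.univ : Finset (Equiv.Perm (Fin n) × Equiv.Perm (Fin r))).filter
        (fun p => F p = π)).card ≤ n * Nat.factorial r := by
    intro π _
    set S := (Finset.univ : Finset (Equiv.Perm (Fin n) × Equiv.Perm (Fin r))).filter
      (fun p => F p = π) with hS
    have h0 : S.card = ∑ x : Fin n,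
        (S.filter (fun p => p.1 (e (Sum.inl ⟨0, hℓ⟩)) = x)).card :=
      Finset.card_eq_sum_card_fiberwise (fun p _ => Finset.mem_univ _)
    -- claim: elements of fibers iterate correctly
    have claim : ∀ p ∈ S, ∀ x : Fin n, p.1 (e (Sum.inl ⟨0, hℓ⟩)) = x →
        ∀ i : ℕ, ∀ hi : i < ℓ, p.1 (e (Sum.inl ⟨i, hi⟩)) = (π ^ i) x := by
      rintro ⟨α, τ⟩ hp x hx i hi
      simp only [hS, Finset.mem_filter] at hp
      have hFp : α * (permCongrMulEquiv e (Equiv.sumCongr c τ)) * α⁻¹ = π := hp.2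
      have hstep : ∀ z, π (α z) = α ((permCongrMulEquiv e (Equiv.sumCongr c τ)) z) := by
        intro z
        rw [← hFp]
        simp [Equiv.Perm.mul_apply]
      induction i with
      | zero => simpa using hx
      | succ i ih =>
        have hi' : i < ℓ := by omega
        have h1 : (⟨i + 1, hi⟩ : Fin ℓ) = c ⟨i, hi'⟩ := (finRotate_step hi hi').symm
        have h2 : (permCongrMulEquiv e (Equiv.sumCongr c τ)) (e (Sum.inl ⟨i, hi'⟩))
            = e (Sum.inl (c ⟨i, hi'⟩)) := by
          simp [permCongrMulEquiv, Equiv.permCongr_apply]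
        rw [h1, pow_succ', Equiv.Perm.mul_apply, ← ih hi', hstep, h2]
    have inner : ∀ x : Fin n,
        (S.filter (fun p => p.1 (e (Sum.inl ⟨0, hℓ⟩)) = x)).card ≤ Nat.factorial r := by
      intro x
      set Sx := S.filter (fun p => p.1 (e (Sum.inl ⟨0, hℓ⟩)) = x) with hSx
      rcases Sx.eq_empty_or_nonempty with hemp | ⟨p₀, hp₀⟩
      · simp [hemp]
      · have hp₀' := Finset.mem_filter.mp hp₀
        have claim₀ := claim p₀ hp₀'.1 x hp₀'.2
        -- the iterates are injective
        have hinj : Function.Injective (fun i : Fin ℓ => (π ^ (i : ℕ)) x) := by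
          intro i j hij
          have h1 : p₀.1 (e (Sum.inl i)) = (π ^ (i : ℕ)) x := by
            have := claim₀ i.1 i.2; simpa using this
          have h2 : p₀.1 (e (Sum.inl j)) = (π ^ (j : ℕ)) x := by
            have := claim₀ j.1 j.2; simpa using this
          have : p₀.1 (e (Sum.inl i)) = p₀.1 (e (Sum.inl j)) := by rw [h1, h2]; exact hij
          have := e.injective (p₀.1.injective this)
          simpa using this
        set T : Finset (Fin n) :=
          Finset.univ \ (Finset.univ.image (fun i : Fin ℓ => (π ^ (i : ℕ)) x)) with hT
        have hTcard : T.card = r := by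
          rw [hT, Finset.card_sdiff_of_subset (Finset.subset_univ _),
            Finset.card_image_of_injective _ hinj, Finset.card_univ, Finset.card_univ,
            Fintype.card_fin, Fintype.card_fin]
          omega
        -- injection from Sx into embeddings Fin r ↪ T
        have hmemT : ∀ p ∈ Sx, ∀ j : Fin r, p.1 (e (Sum.inr j)) ∈ T := by
          intro p hp j
          have hp' := Finset.mem_filter.mp hp
          rw [hT, Finset.mem_sdiff]
          refine ⟨Finset.mem_univ _, ?_⟩
          intro hmem
          obtain ⟨i, _, hi⟩ := Finset.mem_image.mp hmem
          have h1 : p.1 (e (Sum.inl i)) = (π ^ (i : ℕ)) x := by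
            have := claim p hp'.1 x hp'.2 i.1 i.2; simpa using this
          have : p.1 (e (Sum.inl i)) = p.1 (e (Sum.inr j)) := by rw [h1, hi]
          have := e.injective (p.1.injective this)
          simp at this
        let Φ : {p // p ∈ Sx} → (Fin r ↪ {y // y ∈ T}) := fun q =>
          ⟨fun j => ⟨q.1.1 (e (Sum.inr j)), hmemT q.1 q.2 j⟩, by
            intro j j' hjj
            have := congrArg Subtype.val hjj
            have := e.injective (q.1.1.injective this)
            simpa using this⟩
        have hΦinj : Function.Injective Φ := by
          rintro ⟨p, hp⟩ ⟨p', hp'⟩ hpp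
          have hg : ∀ j : Fin r, p.1 (e (Sum.inr j)) = p'.1 (e (Sum.inr j)) := by
            intro j
            have := congrArg (fun f => (f j : Fin n)) (congrArg DFunLike.coe hpp)
            exact this
          have hpS := Finset.mem_filter.mp hp
          have hp'S := Finset.mem_filter.mp hp'
          have hα : p.1 = p'.1 := by
            apply Equiv.ext
            intro y
            have hy : y = e (e.symm y) := (e.apply_symm_apply y).symm
            rw [hy]
            rcases hz : e.symm y with i | j
            · have h1 : p.1 (e (Sum.inl i)) = (π ^ (i : ℕ)) x := by
                have := claim p hpS.1 x hpS.2 i.1 i.2; simpa using this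
              have h2 : p'.1 (e (Sum.inl i)) = (π ^ (i : ℕ)) x := by
                have := claim p' hp'S.1 x hp'S.2 i.1 i.2; simpa using this
              rw [h1, h2]
            · exact hg j
          have hτ : p.2 = p'.2 := by
            have hF : F p = F p' := by
              have h1 : F p = π := (Finset.mem_filter.mp hpS.1).2
              have h2 : F p' = π := (Finset.mem_filter.mp hp'S.1).2
              rw [h1, h2]
            simp only [F, hα] at hF
            have hσ : (permCongrMulEquiv e (Equiv.sumCongr c p.2))
                = (permCongrMulEquiv e (Equiv.sumCongr c p'.2)) :=
              mul_left_cancel (mul_right_cancel hF)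
            have hsc : Equiv.sumCongr c p.2 = Equiv.sumCongr c p'.2 :=
              (permCongrMulEquiv e).injective hσ
            apply Equiv.ext
            intro j
            have := congrArg (fun σ : Equiv.Perm (Fin ℓ ⊕ Fin r) => σ (Sum.inr j)) hsc
            simpa using this
          exact Subtype.ext (Prod.ext hα hτ)
        calc Sx.card = Fintype.card {p // p ∈ Sx} := (Fintype.card_coe _).symm
          _ ≤ Fintype.card (Fin r ↪ {y // y ∈ T}) := Fintype.card_le_of_injective Φ hΦinj
          _ = Nat.descFactorial (Fintype.card {y // y ∈ T}) (Fintype.card (Fin r)) :=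
              Fintype.card_embedding_eq
          _ = Nat.factorial r := by
              rw [Fintype.card_coe, hTcard, Fintype.card_fin, Nat.descFactorial_self]
    calc S.card = ∑ x : Fin n, (S.filter (fun p => p.1 (e (Sum.inl ⟨0, hℓ⟩)) = x)).card := h0
      _ ≤ ∑ _x : Fin n, Nat.factorial r := Finset.sum_le_sum (fun x _ => inner x)
      _ = n * Nat.factorial r := by simp [Finset.sum_const, Finset.card_univ, mul_comm]
  -- assemble
  have himg : (Finset.univ.image F) ⊆
      Finset.univ.filter (fun π : Equiv.Perm (Fin n) => orderOf π = ℓ) := by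
    intro π hπ
    obtain ⟨p, _, rfl⟩ := Finset.mem_image.mp hπ
    simp [hord p]
  have h1 : Nat.factorial n * Nat.factorial r
      ≤ (n * Nat.factorial r) * (Finset.univ.image F).card := by
    calc Nat.factorial n * Nat.factorial r
        = Fintype.card (Equiv.Perm (Fin n) × Equiv.Perm (Fin r)) := by
          rw [Fintype.card_prod, Fintype.card_perm, Fintype.card_perm, Fintype.card_fin,
            Fintype.card_fin]
      _ = (Finset.univ : Finset (Equiv.Perm (Fin n) × Equiv.Perm (Fin r))).card :=
          (Finset.card_univ).symm
      _ ≤ (n * Nat.factorial r) * (Finset.univ.image F).card :=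
          Finset.card_le_mul_card_image _ _ key
  have h2 : (Finset.univ.image F).card
      ≤ (Finset.univ.filter (fun π : Equiv.Perm (Fin n) => orderOf π = ℓ)).card :=
    Finset.card_le_card himg
  have h3 : Nat.factorial n * Nat.factorial r
      ≤ (n * (Finset.univ.filter (fun π : Equiv.Perm (Fin n) => orderOf π = ℓ)).card)
        * Nat.factorial r := by
    calc Nat.factorial n * Nat.factorial r
        ≤ (n * Nat.factorial r) * (Finset.univ.image F).card := h1
      _ ≤ (n * Nat.factorial r) *
          (Finset.univ.filter (fun π : Equiv.Perm (Fin n) => orderOf π = ℓ)).card :=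
          Nat.mul_le_mul_left _ h2
      _ = (n * (Finset.univ.filter
            (fun π : Equiv.Perm (Fin n) => orderOf π = ℓ)).card) * Nat.factorial r := by ring
  exact Nat.le_of_mul_le_mul_right h3 (Nat.factorial_pos r)

def rseq : ℕ → ℕ := fun j => Nat.rec 0 (fun _ a => a + Nat.factorial a) j

lemma rseq_strictMono : StrictMono rseq :=
  strictMono_nat_of_lt_succ (fun j => Nat.lt_add_of_pos_right (Nat.factorial_pos _))

lemma rseq_dvd {i j : ℕ} (h : i ≤ j) : Nat.factorial (rseq i) ∣ (rseq j - rseq i) := by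
  induction j, h using Nat.le_induction with
  | base => simp
  | succ j hij ih =>
    have hle : rseq i ≤ rseq j := rseq_strictMono.monotone hij
    have : rseq (j + 1) - rseq i = (rseq j - rseq i) + Nat.factorial (rseq j) := by
      show rseq j + Nat.factorial (rseq j) - rseq i = _
      omega
    rw [this]
    exact dvd_add ih (Nat.factorial_dvd_factorial hle)

open scoped Classical in
/-- `limsup_n n² · P(ord π = ord π') = ∞` for independent uniform `π, π' ∈ S_n`:
for every `C` there are arbitrarily large `n` with `n² P(ord π = ord π') > C`. -/
theorem stmt5 :
    ∀ C : ℝ, ∃ᶠ n : ℕ in Filter.atTop,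
      C < (n : ℝ) ^ 2 *
        (((Finset.univ.filter (fun p : Equiv.Perm (Fin n) × Equiv.Perm (Fin n) =>
            orderOf p.1 = orderOf p.2)).card : ℝ) / ((Nat.factorial n : ℝ)) ^ 2) := by
  intro C
  rw [Filter.frequently_atTop]
  intro N
  set k := ⌈C⌉₊ + 1 with hk
  set M := k + N with hM
  set n := rseq M with hn
  have hnN : N ≤ n := le_trans (by omega) (rseq_strictMono.le_apply)
  refine ⟨n, hnN, ?_⟩
  have hnpos : 0 < n := by
    have : rseq 0 < rseq M := rseq_strictMono (by omega)
    exact this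
  -- per-j counting
  have hjlt : ∀ j, j < k → rseq j < n := fun j hj => rseq_strictMono (by omega)
  have hA : ∀ j, j < k → Nat.factorial n ≤
      n * (Finset.univ.filter (fun π : Equiv.Perm (Fin n) => orderOf π = n - rseq j)).card := by
    intro j hj
    have hlt : rseq j < n := hjlt j hj
    have hle : rseq j ≤ n := hlt.le
    have hpos : 0 < n - rseq j := by omega
    have hdvd : Nat.factorial (rseq j) ∣ (n - rseq j) := by
      have := rseq_dvd (i := j) (j := M) (by omega)
      rwa [← hn] at this
    have h := core (n - rseq j) (rseq j) hpos hdvd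
    rw [Nat.sub_add_cancel hle] at h
    exact h
  -- disjoint union of products
  set P := (Finset.univ.filter (fun p : Equiv.Perm (Fin n) × Equiv.Perm (Fin n) =>
      orderOf p.1 = orderOf p.2)) with hP
  set A : ℕ → Finset (Equiv.Perm (Fin n)) := fun j =>
    Finset.univ.filter (fun π : Equiv.Perm (Fin n) => orderOf π = n - rseq j) with hA'
  have hsub : (Finset.range k).biUnion (fun j => (A j) ×ˢ (A j)) ⊆ P := by
    intro p hp
    obtain ⟨j, _, hpj⟩ := Finset.mem_biUnion.mp hp
    obtain ⟨h1, h2⟩ := Finset.mem_product.mp hpj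
    have h1' := (Finset.mem_filter.mp h1).2
    have h2' := (Finset.mem_filter.mp h2).2
    rw [hP, Finset.mem_filter]
    exact ⟨Finset.mem_univ _, by rw [h1', h2']⟩
  have hdisj : ∀ j1 ∈ Finset.range k, ∀ j2 ∈ Finset.range k, j1 ≠ j2 →
      Disjoint ((A j1) ×ˢ (A j1)) ((A j2) ×ˢ (A j2)) := by
    intro j1 hj1 j2 hj2 hne
    rw [Finset.disjoint_left]
    intro p hp1 hp2
    have e1 := (Finset.mem_filter.mp (Finset.mem_product.mp hp1).1).2
    have e2 := (Finset.mem_filter.mp (Finset.mem_product.mp hp2).1).2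
    have hr1 : rseq j1 < n := hjlt j1 (Finset.mem_range.mp hj1)
    have hr2 : rseq j2 < n := hjlt j2 (Finset.mem_range.mp hj2)
    have : rseq j1 = rseq j2 := by omega
    exact hne (rseq_strictMono.injective this)
  have hcard : ∑ j ∈ Finset.range k, (A j).card * (A j).card ≤ P.card := by
    calc ∑ j ∈ Finset.range k, (A j).card * (A j).card
        = ∑ j ∈ Finset.range k, ((A j) ×ˢ (A j)).card := by
          simp [Finset.card_product]
      _ = ((Finset.range k).biUnion (fun j => (A j) ×ˢ (A j))).card :=
          (Finset.card_biUnion hdisj).symm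
      _ ≤ P.card := Finset.card_le_card hsub
  -- all-nat inequality
  have hnat : k * (Nat.factorial n) ^ 2 ≤ n ^ 2 * P.card := by
    calc k * (Nat.factorial n) ^ 2
        = ∑ _j ∈ Finset.range k, (Nat.factorial n) ^ 2 := by
          simp [Finset.sum_const, mul_comm]
      _ ≤ ∑ j ∈ Finset.range k, (n * (A j).card) ^ 2 := by
          refine Finset.sum_le_sum (fun j hj => ?_)
          exact Nat.pow_le_pow_left (hA j (Finset.mem_range.mp hj)) 2
      _ = n ^ 2 * ∑ j ∈ Finset.range k, (A j).card * (A j).card := by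
          rw [Finset.mul_sum]
          refine Finset.sum_congr rfl (fun j _ => by ring)
      _ ≤ n ^ 2 * P.card := Nat.mul_le_mul_left _ hcard
  -- transfer to ℝ
  have hfac : (0 : ℝ) < ((Nat.factorial n : ℝ)) ^ 2 := by positivity
  rw [show (n : ℝ) ^ 2 * ((P.card : ℝ) / ((Nat.factorial n : ℝ)) ^ 2)
      = ((n : ℝ) ^ 2 * (P.card : ℝ)) / ((Nat.factorial n : ℝ)) ^ 2 from by ring]
  rw [lt_div_iff₀ hfac]
  have hCk : C < (k : ℝ) := by
    calc C ≤ (⌈C⌉₊ : ℝ) := Nat.le_ceil C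
      _ < (k : ℝ) := by rw [hk]; push_cast; linarith
  calc C * ((Nat.factorial n : ℝ)) ^ 2
      < (k : ℝ) * ((Nat.factorial n : ℝ)) ^ 2 := by
        exact mul_lt_mul_of_pos_right hCk hfac
    _ ≤ (n : ℝ) ^ 2 * (P.card : ℝ) := by
        have := hnat
        push_cast
        exact_mod_cast Nat.cast_le.mpr this
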